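/- Let X be a locally compact metrizable space and let G be a bounded group of lattice isomorphisms of C₀(X), i.e., a group under composition of lattice isomorphisms for which there exists C ≥ 1 with C⁻¹‖x‖_∞ ≤ ‖g x‖_∞ ≤ C‖x‖_∞ for all g ∈ G and x ∈ C₀(X). Define ‖x‖_G = sup_{g ∈ G} ‖g x‖_∞. Then there exists a (not necessarily continuous) function m_G : X → (0, ∞), bounded and bounded away from 0, such that ‖x‖_G = sup_{t ∈ X} m_G(t)·|x(t)| for every x ∈ C₀(X). -/

import Mathlib

open ZeroAtInfty Filter Topology Metric

noncomputable section

/-- Pointwise supremum of two continuous functions vanishing at infinity. -/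
def c0sup {X : Type*} [TopologicalSpace X] (f g : C₀(X, ℝ)) : C₀(X, ℝ) where
  toFun := fun t => max (f t) (g t)
  continuous_toFun := (map_continuous f).max (map_continuous g)
  zero_at_infty' := by simpa using (zero_at_infty f).max (zero_at_infty g)

lemma c0sup_apply {X : Type*} [TopologicalSpace X] (f g : C₀(X, ℝ)) (t : X) :
    c0sup f g t = max (f t) (g t) := rfl

lemma c0_norm_le {X : Type*} [TopologicalSpace X] (f : C₀(X, ℝ)) {M : ℝ} (hM : 0 ≤ M)
    (h : ∀ t, |f t| ≤ M) : ‖f‖ ≤ M := by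
  rw [← ZeroAtInftyContinuousMap.norm_toBCF_eq_norm]
  exact BoundedContinuousFunction.norm_le hM |>.mpr h

lemma c0_abs_le_norm {X : Type*} [TopologicalSpace X] (f : C₀(X, ℝ)) (t : X) : |f t| ≤ ‖f‖ := by
  rw [← ZeroAtInftyContinuousMap.norm_toBCF_eq_norm]
  exact f.toBCF.norm_coe_le_norm t

set_option maxHeartbeats 1000000

lemma real_iSup_empty {ι : Type*} [IsEmpty ι] (f : ι → ℝ) : ⨆ i, f i = 0 := by
  rw [iSup, Set.range_eq_empty, Real.sSup_empty]

/-- **Theorem 6.1.** Let `X` be a locally compact metrizable space and `G` a bounded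
group of lattice isomorphisms of `C₀(X)`. Then there is a (not necessarily continuous)
function `m_G : X → (0, ∞)`, bounded and bounded away from `0`, such that
`‖x‖_G := sup_{g ∈ G} ‖g x‖ = sup_{t ∈ X} m_G(t) · |x(t)|` for all `x ∈ C₀(X)`. -/
theorem stmt15 {X : Type*} [TopologicalSpace X] [LocallyCompactSpace X]
    [TopologicalSpace.MetrizableSpace X]
    (G : Set (C₀(X, ℝ) ≃L[ℝ] C₀(X, ℝ)))
    (h_id : ContinuousLinearEquiv.refl ℝ C₀(X, ℝ) ∈ G)
    (h_comp : ∀ g ∈ G, ∀ h ∈ G, g.trans h ∈ G)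
    (h_inv : ∀ g ∈ G, g.symm ∈ G)
    (h_lat : ∀ g ∈ G, ∀ f₁ f₂ : C₀(X, ℝ), g (c0sup f₁ f₂) = c0sup (g f₁) (g f₂))
    (C : ℝ) (hC : 1 ≤ C)
    (h_bdd : ∀ g ∈ G, ∀ x : C₀(X, ℝ), C⁻¹ * ‖x‖ ≤ ‖g x‖ ∧ ‖g x‖ ≤ C * ‖x‖) :
    ∃ m : X → ℝ, (∃ c > 0, ∀ t, c ≤ m t) ∧ (∃ C' : ℝ, ∀ t, m t ≤ C') ∧
      ∀ x : C₀(X, ℝ), (⨆ g : G, ‖g.1 x‖) = ⨆ t : X, m t * |x t| := by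
  classical
  letI := TopologicalSpace.metrizableSpaceMetric X
  haveI hGne : Nonempty G := ⟨⟨_, h_id⟩⟩
  set N : C₀(X, ℝ) → ℝ := fun x => ⨆ g : G, ‖g.1 x‖ with hNdef
  have hbdd : ∀ x : C₀(X, ℝ), BddAbove (Set.range fun g : G => ‖g.1 x‖) := by
    intro x
    refine ⟨C * ‖x‖, ?_⟩
    rintro _ ⟨g, rfl⟩
    exact (h_bdd g.1 g.2 x).2
  have hN_le : ∀ x : C₀(X, ℝ), N x ≤ C * ‖x‖ := fun x =>
    ciSup_le fun g => (h_bdd g.1 g.2 x).2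
  have hle_N : ∀ x : C₀(X, ℝ), ‖x‖ ≤ N x := by
    intro x
    have := le_ciSup (hbdd x) (⟨_, h_id⟩ : G)
    simpa using this
  have hN0 : ∀ x : C₀(X, ℝ), 0 ≤ N x := fun x => (norm_nonneg x).trans (hle_N x)
  have hterm_le : ∀ (g : G) (x : C₀(X, ℝ)), ‖g.1 x‖ ≤ N x := fun g x => le_ciSup (hbdd x) g
  -- the pointwise absolute value
  set cabs : C₀(X, ℝ) → C₀(X, ℝ) := fun x => c0sup x (-x) with hcabsdef
  have hcabs_apply : ∀ (x : C₀(X, ℝ)) (t : X), cabs x t = |x t| := by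
    intro x t
    simp [hcabsdef, c0sup_apply, abs_eq_max_neg]
  have hg_cabs : ∀ g ∈ G, ∀ x : C₀(X, ℝ), g (cabs x) = cabs (g x) := by
    intro g hg x
    simp only [hcabsdef]
    rw [h_lat g hg, map_neg]
  have hnorm_cabs : ∀ x : C₀(X, ℝ), ‖cabs x‖ = ‖x‖ := by
    intro x
    refine le_antisymm (c0_norm_le _ (norm_nonneg x) fun t => ?_)
      (c0_norm_le _ ?_ fun t => ?_)
    · rw [hcabs_apply, abs_abs]; exact c0_abs_le_norm x t
    · exact (norm_nonneg _)
    · rw [← abs_abs (x t), ← hcabs_apply]; exact c0_abs_le_norm _ t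
  have hN_cabs : ∀ x : C₀(X, ℝ), N (cabs x) = N x := by
    intro x
    simp only [hNdef]
    refine iSup_congr fun g => ?_
    rw [hg_cabs g.1 g.2 x, hnorm_cabs]
  have hg_nonneg : ∀ g ∈ G, ∀ x : C₀(X, ℝ), (∀ s, 0 ≤ x s) → ∀ s, 0 ≤ g x s := by
    intro g hg x hx s
    have h1 : cabs x = x := by
      ext t; rw [hcabs_apply]; exact abs_of_nonneg (hx t)
    have h2 : cabs (g x) = g x := by rw [← hg_cabs g hg, h1]
    have := hcabs_apply (g x) s
    rw [h2] at this
    rw [this]; exact abs_nonneg _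
  -- monotonicity of the norm under `g` on nonnegative functions
  have hnorm_mono : ∀ g ∈ G, ∀ x y : C₀(X, ℝ), (∀ s, 0 ≤ x s) → (∀ s, x s ≤ y s) →
      ‖g x‖ ≤ ‖g y‖ := by
    intro g hg x y hx hxy
    have hsup : c0sup x y = y := by
      ext t; rw [c0sup_apply]; exact max_eq_right (hxy t)
    have hkey : c0sup (g x) (g y) = g y := by rw [← h_lat g hg, hsup]
    have hle : ∀ s, g x s ≤ g y s := by
      intro s
      have : max (g x s) (g y s) = g y s := by
        rw [← c0sup_apply, hkey]
      exact le_of_max_le_left this.le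
    refine c0_norm_le _ (norm_nonneg _) fun s => ?_
    rw [abs_of_nonneg (hg_nonneg g hg x hx s)]
    exact (hle s).trans ((le_abs_self _).trans (c0_abs_le_norm _ s))
  have hN_mono : ∀ x y : C₀(X, ℝ), (∀ s, 0 ≤ x s) → (∀ s, x s ≤ y s) → N x ≤ N y := by
    intro x y hx hxy
    exact ciSup_le fun g => (hnorm_mono g.1 g.2 x y hx hxy).trans (hterm_le g y)
  have hN_add : ∀ x y : C₀(X, ℝ), N (x + y) ≤ N x + N y := by
    intro x y
    refine ciSup_le fun g => ?_
    rw [map_add]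
    exact (norm_add_le _ _).trans (add_le_add (hterm_le g x) (hterm_le g y))
  have hN_smul : ∀ (c : ℝ), 0 ≤ c → ∀ x : C₀(X, ℝ), N (c • x) ≤ c * N x := by
    intro c hc x
    refine ciSup_le fun g => ?_
    rw [map_smul]
    have h1 : ‖c • g.1 x‖ ≤ c * ‖g.1 x‖ := by
      refine c0_norm_le _ (mul_nonneg hc (norm_nonneg _)) fun s => ?_
      have : (c • g.1 x) s = c * (g.1 x) s := rfl
      rw [this, abs_mul, abs_of_nonneg hc]
      exact mul_le_mul_of_nonneg_left (c0_abs_le_norm _ s) hc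
    exact h1.trans (mul_le_mul_of_nonneg_left (hterm_le g x) hc)
  have hN_sup : ∀ x y : C₀(X, ℝ), (∀ s, 0 ≤ x s) → (∀ s, 0 ≤ y s) →
      N (c0sup x y) ≤ max (N x) (N y) := by
    intro x y hx hy
    refine ciSup_le fun g => ?_
    rw [h_lat g.1 g.2]
    refine c0_norm_le _ (le_max_of_le_left (hN0 x)) fun s => ?_
    rw [c0sup_apply, abs_of_nonneg (le_max_of_le_left (hg_nonneg g.1 g.2 x hx s))]
    refine max_le ?_ ?_
    · exact ((le_abs_self _).trans (c0_abs_le_norm _ s)).trans ((hterm_le g x).trans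
        (le_max_left _ _))
    · exact ((le_abs_self _).trans (c0_abs_le_norm _ s)).trans ((hterm_le g y).trans
        (le_max_right _ _))
  have hN_zero : N 0 = 0 := by
    simp only [hNdef]
    have : ∀ g : G, ‖g.1 (0 : C₀(X, ℝ))‖ = 0 := by intro g; rw [map_zero, norm_zero]
    simp only [this, ciSup_const]
  -- existence of Urysohn bump functions
  have hbump : ∀ t : X, ∃ u : C₀(X, ℝ), (∀ s, 0 ≤ u s) ∧ (∀ s, u s ≤ 1) ∧ u t = 1 := by
    intro t
    obtain ⟨f, hf1, -, hfc, hf01⟩ := exists_continuous_one_zero_of_isCompact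
      (isCompact_singleton (x := t)) isClosed_empty (Set.disjoint_empty _)
    refine ⟨⟨f, hfc.is_zero_at_infty⟩, fun s => (hf01 s).1, fun s => (hf01 s).2, ?_⟩
    exact hf1 rfl
  -- the weight function
  set mset : X → Set ℝ := fun t => N '' {u : C₀(X, ℝ) | (∀ s, 0 ≤ u s) ∧ u t = 1} with hmsetdef
  have hmset_ne : ∀ t, (mset t).Nonempty := by
    intro t
    obtain ⟨u, h0, -, h1⟩ := hbump t
    exact ⟨N u, ⟨u, ⟨h0, h1⟩, rfl⟩⟩
  have hmset_lb : ∀ t, ∀ v ∈ mset t, (1 : ℝ) ≤ v := by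
    rintro t _ ⟨u, ⟨-, h1⟩, rfl⟩
    calc (1 : ℝ) = |u t| := by rw [h1]; norm_num
    _ ≤ ‖u‖ := c0_abs_le_norm u t
    _ ≤ N u := hle_N u
  set m : X → ℝ := fun t => sInf (mset t) with hmdef
  have hm_lb : ∀ t, (1 : ℝ) ≤ m t := fun t => le_csInf (hmset_ne t) (hmset_lb t)
  have hm_ub : ∀ t, m t ≤ C := by
    intro t
    obtain ⟨u, h0, hle1, h1⟩ := hbump t
    refine csInf_le_of_le ⟨1, hmset_lb t⟩ (⟨u, ⟨h0, h1⟩, rfl⟩ : N u ∈ mset t) ?_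
    calc N u ≤ C * ‖u‖ := hN_le u
    _ ≤ C * 1 := by
        refine mul_le_mul_of_nonneg_left ?_ (by linarith)
        exact c0_norm_le u one_pos.le fun s => by
          rw [abs_of_nonneg (h0 s)]; exact hle1 s
    _ = C := mul_one C
  -- easy direction: `m t * |x t| ≤ N x`
  have heasy : ∀ (x : C₀(X, ℝ)) (t : X), m t * |x t| ≤ N x := by
    intro x t
    rcases eq_or_ne (x t) 0 with hxt | hxt
    · rw [hxt, abs_zero, mul_zero]; exact hN0 x
    have habs : 0 < |x t| := abs_pos.mpr hxt
    set v : C₀(X, ℝ) := |x t|⁻¹ • cabs x with hvdef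
    have hv0 : ∀ s, 0 ≤ v s := by
      intro s
      show 0 ≤ |x t|⁻¹ * cabs x s
      rw [hcabs_apply]
      exact mul_nonneg (inv_nonneg.mpr (abs_nonneg _)) (abs_nonneg _)
    have hv1 : v t = 1 := by
      show |x t|⁻¹ * cabs x t = 1
      rw [hcabs_apply]
      exact inv_mul_cancel₀ habs.ne'
    have hmv : m t ≤ N v := csInf_le ⟨1, hmset_lb t⟩ ⟨v, ⟨hv0, hv1⟩, rfl⟩
    have hNv : N v ≤ |x t|⁻¹ * N x := by
      calc N v ≤ |x t|⁻¹ * N (cabs x) := hN_smul _ (by positivity) _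
      _ = |x t|⁻¹ * N x := by rw [hN_cabs]
    have := hmv.trans hNv
    calc m t * |x t| ≤ (|x t|⁻¹ * N x) * |x t| :=
      mul_le_mul_of_nonneg_right this habs.le
    _ = N x := by field_simp
  -- the sup on the right-hand side
  have hSbdd : ∀ x : C₀(X, ℝ), BddAbove (Set.range fun t : X => m t * |x t|) := by
    intro x
    refine ⟨C * ‖x‖, ?_⟩
    rintro _ ⟨t, rfl⟩
    exact mul_le_mul (hm_ub t) (c0_abs_le_norm x t) (abs_nonneg _) (by linarith)
  have hS_le : ∀ x : C₀(X, ℝ), (⨆ t : X, m t * |x t|) ≤ N x := by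
    intro x
    rcases isEmpty_or_nonempty X with hX | hX
    · rw [real_iSup_empty]; exact hN0 x
    · exact ciSup_le fun t => heasy x t
  have hS0 : ∀ x : C₀(X, ℝ), 0 ≤ ⨆ t : X, m t * |x t| := by
    intro x
    rcases isEmpty_or_nonempty X with hX | hX
    · rw [real_iSup_empty]
    · obtain ⟨t⟩ := hX
      exact le_trans (mul_nonneg (le_trans zero_le_one (hm_lb t)) (abs_nonneg _))
        (le_ciSup (hSbdd x) t)
  -- list fold lemmas
  have hfold_nonneg : ∀ l : List C₀(X, ℝ), (∀ a ∈ l, ∀ s, 0 ≤ a s) →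
      ∀ s, 0 ≤ (l.foldr c0sup 0) s := by
    intro l
    induction l with
    | nil => intro _ s; simp
    | cons a l ih =>
      intro h s
      rw [List.foldr_cons, c0sup_apply]
      exact le_max_of_le_left (h a (List.mem_cons_self) s)
  have hfold_mem : ∀ l : List C₀(X, ℝ), ∀ a ∈ l, ∀ s, a s ≤ (l.foldr c0sup 0) s := by
    intro l
    induction l with
    | nil => intro a ha; simp at ha
    | cons b l ih =>
      intro a ha s
      rw [List.foldr_cons, c0sup_apply]
      rcases List.mem_cons.mp ha with rfl | ha
      · exact le_max_left _ _
      · exact le_max_of_le_right (ih a ha s)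
  have hfold_N : ∀ (B : ℝ), 0 ≤ B → ∀ l : List C₀(X, ℝ), (∀ a ∈ l, ∀ s, 0 ≤ a s) →
      (∀ a ∈ l, N a ≤ B) → N (l.foldr c0sup 0) ≤ B := by
    intro B hB l
    induction l with
    | nil => intro _ _; rw [List.foldr_nil, hN_zero]; exact hB
    | cons a l ih =>
      intro h0 hNl
      rw [List.foldr_cons]
      refine (hN_sup a _ (fun s => h0 a (List.mem_cons_self) s)
        (hfold_nonneg l (fun b hb => h0 b (List.mem_cons_of_mem a hb)) )).trans ?_
      refine max_le (hNl a (List.mem_cons_self)) ?_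
      exact ih (fun b hb => h0 b (List.mem_cons_of_mem a hb))
        (fun b hb => hNl b (List.mem_cons_of_mem a hb))
  -- hard direction
  have hhard : ∀ x : C₀(X, ℝ), N x ≤ ⨆ t : X, m t * |x t| := by
    intro x
    set S : ℝ := ⨆ t : X, m t * |x t| with hSdef
    have hS0' : 0 ≤ S := hS0 x
    refine le_of_forall_pos_le_add fun η hη => ?_
    set A : ℝ := ‖x‖ + C + 1 with hAdef
    have hA0 : 0 < A := by have := norm_nonneg x; simp only [hAdef]; linarith
    set D : ℝ := 2 * S + 2 * A + C + 1 with hDdef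
    have hD0 : 0 < D := by simp only [hDdef]; linarith
    set ε : ℝ := min (η / D) (1 / 2) with hεdef
    have hε0 : 0 < ε := lt_min (div_pos hη hD0) (by norm_num)
    have hεhalf : ε ≤ 1 / 2 := min_le_right _ _
    have hε1 : ε < 1 := lt_of_le_of_lt hεhalf (by norm_num)
    have hεD : ε * D ≤ η := by
      have : ε ≤ η / D := min_le_left _ _
      calc ε * D ≤ (η / D) * D := mul_le_mul_of_nonneg_right this hD0.le
      _ = η := div_mul_cancel₀ η hD0.ne'
    -- choose bump functions
    have happrox : ∀ t : X, ∃ u : C₀(X, ℝ), (∀ s, 0 ≤ u s) ∧ u t = 1 ∧ N u ≤ m t + ε := by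
      intro t
      have : sInf (mset t) < m t + ε := by
        show m t < m t + ε
        linarith
      obtain ⟨v, hv, hvlt⟩ := exists_lt_of_csInf_lt (hmset_ne t) this
      obtain ⟨u, ⟨hu0, hu1⟩, rfl⟩ := hv
      exact ⟨u, hu0, hu1, hvlt.le⟩
    choose u hu0 hu1 hNu using happrox
    -- compact set
    set K : Set X := {s | ε ≤ |x s|} with hKdef
    have hKcl : IsClosed K := by
      have : K = (fun s => |x s|) ⁻¹' Set.Ici ε := rfl
      rw [this]
      exact (isClosed_Ici).preimage ((map_continuous x).abs)
    have hKcpt : IsCompact K := by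
      have hmem : x ⁻¹' Metric.ball (0 : ℝ) ε ∈ cocompact X :=
        (zero_at_infty x) (Metric.ball_mem_nhds (0 : ℝ) hε0)
      obtain ⟨Kc, hKc, hsub⟩ := mem_cocompact.mp hmem
      refine hKc.of_isClosed_subset hKcl ?_
      intro s hs
      by_contra hsK
      have : s ∈ x ⁻¹' Metric.ball (0 : ℝ) ε := hsub hsK
      simp only [Set.mem_preimage, Metric.mem_ball, dist_zero_right, Real.norm_eq_abs] at this
      exact absurd hs (by simp only [hKdef, Set.mem_setOf_eq]; linarith)
    -- open cover
    set V : X → Set X := fun t => {s | |x s| < |x t| + ε} ∩ {s | 1 - ε < u t s} with hVdef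
    have hVopen : ∀ t, IsOpen (V t) := by
      intro t
      refine IsOpen.inter ?_ ?_
      · exact isOpen_Iio.preimage ((map_continuous x).abs)
      · exact isOpen_Ioi.preimage (map_continuous (u t))
    have hVmem : ∀ t, t ∈ V t := by
      intro t
      constructor
      · simp only [Set.mem_setOf_eq]; linarith
      · simp only [Set.mem_setOf_eq, hu1 t]; linarith
    obtain ⟨T, hT⟩ := hKcpt.elim_finite_subcover V hVopen
      (fun s hs => Set.mem_iUnion.mpr ⟨s, hVmem s⟩)
    -- the dominating function
    set c : X → ℝ := fun t => (|x t| + ε) / (1 - ε) with hcdef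
    have hc0 : ∀ t, 0 ≤ c t := by
      intro t
      have h1 := abs_nonneg (x t)
      have h2 : (0:ℝ) < 1 - ε := by linarith
      exact div_nonneg (by linarith) h2.le
    set L : List C₀(X, ℝ) := T.toList.map (fun t => c t • u t) with hLdef
    set F : C₀(X, ℝ) := L.foldr c0sup 0 with hFdef
    have hL0 : ∀ a ∈ L, ∀ s, 0 ≤ a s := by
      intro a ha s
      simp only [hLdef, List.mem_map] at ha
      obtain ⟨t, -, rfl⟩ := ha
      show 0 ≤ c t * u t s
      exact mul_nonneg (hc0 t) (hu0 t s)
    have hF0 : ∀ s, 0 ≤ F s := hfold_nonneg L hL0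
    -- pointwise bound
    have hpt : ∀ s, |x s| ≤ F s + ε := by
      intro s
      by_cases hs : s ∈ K
      · have := hT hs
        rw [Set.mem_iUnion₂] at this
        obtain ⟨t, htT, hsV⟩ := this
        obtain ⟨h1, h2⟩ := hsV
        simp only [Set.mem_setOf_eq] at h1 h2
        have hcs : |x t| + ε ≤ c t * u t s := by
          have h3 : c t * (1 - ε) = |x t| + ε := by
            show (|x t| + ε) / (1 - ε) * (1 - ε) = |x t| + ε
            exact div_mul_cancel₀ _ (sub_ne_zero.mpr hε1.ne')
          calc |x t| + ε = c t * (1 - ε) := h3.symm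
          _ ≤ c t * u t s := mul_le_mul_of_nonneg_left h2.le (hc0 t)
        have hmem : (c t • u t) ∈ L := by
          simp only [hLdef, List.mem_map]
          exact ⟨t, Finset.mem_toList.mpr htT, rfl⟩
        have := hfold_mem L _ hmem s
        have hval : (c t • u t) s = c t * u t s := rfl
        rw [hval] at this
        calc |x s| ≤ |x t| + ε := h1.le
        _ ≤ c t * u t s := hcs
        _ ≤ F s := this
        _ ≤ F s + ε := by linarith
      · simp only [hKdef, Set.mem_setOf_eq, not_le] at hs
        have := hF0 s
        linarith
    -- the remainder
    set r : C₀(X, ℝ) := c0sup (cabs x - F) 0 with hrdef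
    have hr_apply : ∀ s, r s = max (|x s| - F s) 0 := by
      intro s
      show max ((cabs x - F) s) ((0 : C₀(X, ℝ)) s) = _
      have h1 : (cabs x - F) s = cabs x s - F s := rfl
      rw [h1, hcabs_apply]
      norm_num
    have hr0 : ∀ s, 0 ≤ r s := fun s => by rw [hr_apply]; exact le_max_right _ _
    have hrε : ∀ s, r s ≤ ε := by
      intro s
      rw [hr_apply]
      refine max_le ?_ hε0.le
      have := hpt s
      linarith
    have hNr : N r ≤ C * ε := by
      refine (hN_le r).trans ?_
      refine mul_le_mul_of_nonneg_left ?_ (by linarith)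
      exact c0_norm_le r hε0.le fun s => by rw [abs_of_nonneg (hr0 s)]; exact hrε s
    -- bound N F
    set B : ℝ := (S + ε * A) / (1 - ε) with hBdef
    have hB0 : 0 ≤ B := by
      refine div_nonneg ?_ (by linarith)
      nlinarith
    have hNF : N F ≤ B := by
      refine hfold_N B hB0 L hL0 ?_
      intro a ha
      simp only [hLdef, List.mem_map] at ha
      obtain ⟨t, -, rfl⟩ := ha
      have h1 : N (c t • u t) ≤ c t * (m t + ε) :=
        (hN_smul (c t) (hc0 t) (u t)).trans
          (mul_le_mul_of_nonneg_left (hNu t) (hc0 t))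
      refine h1.trans ?_
      have h2 : c t * (m t + ε) = ((|x t| + ε) * (m t + ε)) / (1 - ε) := by
        rw [hcdef]; ring
      rw [h2, hBdef]
      have h3 : (|x t| + ε) * (m t + ε) ≤ S + ε * A := by
        have hxt : |x t| ≤ ‖x‖ := c0_abs_le_norm x t
        have hmt1 : m t * |x t| ≤ S := le_ciSup (hSbdd x) t
        have hmt2 : m t ≤ C := hm_ub t
        have hε1' : ε ≤ 1 := hε1.le
        have habs : 0 ≤ |x t| := abs_nonneg _
        simp only [hAdef]
        nlinarith [mul_comm (m t) (|x t|)]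
      exact div_le_div_of_nonneg_right h3 (by linarith) |>.trans (le_refl _)
    -- combine
    have hxF : ∀ s, cabs x s ≤ (F + r) s := by
      intro s
      have h1 : (F + r) s = F s + r s := rfl
      rw [h1, hcabs_apply, hr_apply]
      have := le_max_left (|x s| - F s) 0
      linarith
    have hNx : N x ≤ B + C * ε := by
      calc N x = N (cabs x) := (hN_cabs x).symm
      _ ≤ N (F + r) := hN_mono _ _ (fun s => by rw [hcabs_apply]; positivity) hxF
      _ ≤ N F + N r := hN_add F r
      _ ≤ B + C * ε := add_le_add hNF hNr
    have hBS : B ≤ S + ε * (2 * S + 2 * A) := by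
      rw [hBdef, div_le_iff₀ (by linarith : (0 : ℝ) < 1 - ε)]
      nlinarith [mul_nonneg (mul_nonneg hε0.le (by linarith : (0:ℝ) ≤ S + A))
        (by linarith : (0:ℝ) ≤ 1 - 2 * ε)]
    calc N x ≤ B + C * ε := hNx
    _ ≤ S + ε * (2 * S + 2 * A) + C * ε := by linarith
    _ = S + ε * (2 * S + 2 * A + C) := by ring
    _ ≤ S + ε * D := by
        refine (add_le_add_iff_left S).mpr ?_
        refine mul_le_mul_of_nonneg_left ?_ hε0.le
        simp only [hDdef]; linarith
    _ ≤ S + η := by linarith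
  exact ⟨m, ⟨1, one_pos, hm_lb⟩, ⟨C, hm_ub⟩, fun x => le_antisymm (hhard x) (hS_le x)⟩

end
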